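/- Let n be a positive integer and let D be an infinite division ring, viewed as a first-order structure in the language of rings, satisfying (†)_n. Then every strictly descending chain F_0 ⊋ F_1 ⊋ ⋯ ⊋ F_{k−1} of infinite definable subfields of D satisfies k ≤ ⌊log₂(n)⌋ + 1. -/

import Mathlib

open FirstOrder FirstOrder.Language FirstOrder.Ring

namespace Stmt11Aux

variable {D : Type*}

def dProd [Monoid D] {m : ℕ} (a : Fin m → D) (η : Fin m → Bool) : D :=
  ((List.finRange m).map (fun i => if η i then a i else 1)).prod

theorem dProd_succ [Monoid D] {m : ℕ} (a : Fin (m + 1) → D) (b : Bool) (η : Fin m → Bool) :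
    dProd a (Fin.cons b η) = (if b then a 0 else 1) * dProd (fun i => a i.succ) η := by
  simp [dProd, List.finRange_succ, List.map_map, Function.comp_def, Fin.cons_succ]

theorem indep [DivisionRing D] :
    ∀ (m : ℕ) (G : Fin (m + 1) → Subfield D),
      (∀ i j : Fin (m + 1), i ≤ j → G j ≤ G i) →
      ∀ a : Fin m → D, (∀ i, a i ∈ G i.castSucc) → (∀ i, a i ∉ G i.succ) →
      ∀ c : (Fin m → Bool) → D, (∀ η, c η ∈ G (Fin.last m)) →
      (∑ η, dProd a η * c η) = 0 → ∀ η, c η = 0 := by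
  intro m
  induction m with
  | zero =>
    intro G hmono a ha1 ha2 c hc hsum η
    rw [Fintype.sum_unique] at hsum
    simp only [dProd, List.finRange_zero, List.map_nil, List.prod_nil, one_mul] at hsum
    exact (Subsingleton.elim _ η) ▸ hsum
  | succ m IH =>
    intro G hmono a ha1 ha2 c hc hsum
    have hsum2 : (∑ η' : Fin m → Bool, dProd (fun i => a i.succ) η' * c (Fin.cons false η'))
        + a 0 * (∑ η' : Fin m → Bool, dProd (fun i => a i.succ) η' * c (Fin.cons true η'))
        = 0 := by
      rw [← hsum]
      rw [← Equiv.sum_comp (Fin.consEquiv (fun _ => Bool)) (fun η => dProd a η * c η)]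
      rw [Fintype.sum_prod_type, Fintype.sum_bool]
      simp only [Fin.consEquiv, Equiv.coe_fn_mk, dProd_succ, Finset.mul_sum, mul_assoc]
      simp only [Bool.false_eq_true, if_true, if_false, one_mul]
      rw [add_comm]
    have hmem : ∀ (b : Bool),
        (∑ η' : Fin m → Bool, dProd (fun i => a i.succ) η' * c (Fin.cons b η')) ∈ G 1 := by
      intro b
      refine sum_mem (fun η' _ => ?_)
      refine mul_mem ?_ (hmono 1 (Fin.last (m + 1)) (by simp [Fin.le_def]) (hc _))
      refine list_prod_mem ?_
      intro x hx
      simp only [List.mem_map, List.mem_finRange, true_and] at hx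
      obtain ⟨i, rfl⟩ := hx
      by_cases h : η' i
      · simp only [h, if_true]
        exact hmono 1 i.succ.castSucc (by simp [Fin.le_def]) (ha1 i.succ)
      · simp only [h, if_false]
        exact one_mem _
    have hY0 : (∑ η' : Fin m → Bool, dProd (fun i => a i.succ) η' * c (Fin.cons true η')) = 0 := by
      by_contra hY
      have h0 : a 0 = (-(∑ η' : Fin m → Bool, dProd (fun i => a i.succ) η' * c (Fin.cons false η')))
          * (∑ η' : Fin m → Bool, dProd (fun i => a i.succ) η' * c (Fin.cons true η'))⁻¹ := by
        have h1 : a 0 * (∑ η' : Fin m → Bool, dProd (fun i => a i.succ) η' * c (Fin.cons true η'))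
            = -(∑ η' : Fin m → Bool, dProd (fun i => a i.succ) η' * c (Fin.cons false η')) := by
          exact eq_neg_of_add_eq_zero_right hsum2
        rw [← h1, mul_assoc, mul_inv_cancel₀ hY, mul_one]
      have : a 0 ∈ G 1 := by
        rw [h0]
        exact mul_mem (neg_mem (hmem false)) (inv_mem (hmem true))
      have h2 := ha2 0
      rw [Fin.succ_zero_eq_one] at h2
      exact h2 this
    have hX0 : (∑ η' : Fin m → Bool, dProd (fun i => a i.succ) η' * c (Fin.cons false η')) = 0 := by
      rw [hY0, mul_zero, add_zero] at hsum2
      exact hsum2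
    have key : ∀ (b : Bool) (η' : Fin m → Bool), c (Fin.cons b η') = 0 := by
      intro b
      refine IH (fun i => G i.succ) (fun i j hij => hmono _ _ (Fin.succ_le_succ_iff.mpr hij))
        (fun i => a i.succ) (fun i => ?_) (fun i => ha2 i.succ)
        (fun η' => c (Fin.cons b η')) (fun η' => ?_) ?_
      · have := ha1 i.succ
        rwa [← Fin.succ_castSucc] at this
      · have := hc (Fin.cons b η')
        rwa [← Fin.succ_last] at this
      · cases b
        · exact hX0
        · exact hY0
    intro η
    have := key (η 0) (Fin.tail η)
    rwa [Fin.cons_self_tail] at this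

/-- Sum of a list of ring terms. -/
def sumTerm {γ : Type*} : List (Language.ring.Term γ) → Language.ring.Term γ
  | [] => 0
  | t :: ts => t + sumTerm ts

theorem realize_sumTerm {R : Type*} [DivisionRing R] [CompatibleRing R] {γ : Type*}
    (v : γ → R) : ∀ l : List (Language.ring.Term γ),
    (sumTerm l).realize v = (l.map fun t => t.realize v).sum
  | [] => by simp [sumTerm]
  | t :: ts => by simp [sumTerm, realize_sumTerm v ts]

theorem definable_span [DivisionRing D] [CompatibleRing D] {ι : Type*} [Fintype ι]
    (c : ι → D) (K : ι → Set D)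
    (hK : ∀ i, Set.Definable₁ (Set.univ : Set D) Language.ring (K i)) :
    Set.Definable₁ (Set.univ : Set D) Language.ring
      {x : D | ∃ y : ι → D, (∀ i, y i ∈ K i) ∧ x = ∑ i, c i * y i} := by
  classical
  have hK' : ∀ i, Set.Definable (Set.univ : Set D) Language.ring
      {x : Fin 1 → D | x 0 ∈ K i} := hK
  have h1 : ∀ i : ι, Set.Definable (Set.univ : Set D) Language.ring
      {v : ι ⊕ Fin 1 → D | v (Sum.inl i) ∈ K i} := fun i =>
    (hK' i).preimage_comp (fun _ : Fin 1 => Sum.inl i)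
  have h2 : Set.Definable (Set.univ : Set D) Language.ring
      {v : ι ⊕ Fin 1 → D | v (Sum.inr 0) = ∑ i, c i * v (Sum.inl i)} := by
    rw [Set.definable_iff_exists_formula_sum]
    refine ⟨Term.equal (Term.var (Sum.inr (Sum.inr 0)))
        (sumTerm ((Finset.univ.toList (α := ι)).map fun i =>
          Term.var (Sum.inl ⟨c i, Set.mem_univ _⟩) * Term.var (Sum.inr (Sum.inl i)))), ?_⟩
    ext v
    simp only [Set.mem_setOf_eq, Formula.realize_equal, Term.realize_var, Sum.elim_inr,
      realize_sumTerm, List.map_map, Function.comp_def, realize_mul, Sum.elim_inl]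
    rw [Finset.sum_map_toList]
  have h3 : Set.Definable (Set.univ : Set D) Language.ring
      ((⋂ i ∈ (Finset.univ : Finset ι), {v : ι ⊕ Fin 1 → D | v (Sum.inl i) ∈ K i}) ∩
        {v : ι ⊕ Fin 1 → D | v (Sum.inr 0) = ∑ i, c i * v (Sum.inl i)}) :=
    (Set.definable_biInter_finset h1 Finset.univ).inter h2
  have h4 := h3.image_comp (fun _ : Fin 1 => (Sum.inr 0 : ι ⊕ Fin 1))
  show Set.Definable (Set.univ : Set D) Language.ring
    {x : Fin 1 → D | x 0 ∈ {x : D | ∃ y : ι → D, (∀ i, y i ∈ K i) ∧ x = ∑ i, c i * y i}}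
  convert h4 using 1
  ext h
  simp only [Set.mem_setOf_eq, Set.mem_image, Set.mem_inter_iff, Set.mem_iInter]
  constructor
  · rintro ⟨y, hy, hxy⟩
    refine ⟨Sum.elim y (fun _ => h 0), ⟨fun i _ => hy i, hxy⟩, ?_⟩
    funext x
    rw [Subsingleton.elim x 0]
    rfl
  · rintro ⟨v, ⟨hvi, hvE⟩, rfl⟩
    exact ⟨v ∘ Sum.inl, fun i => hvi i (Finset.mem_univ i), hvE⟩

end Stmt11Aux

/-- The chain condition (†)_n: for any definable additive subgroups H_0, …, H_n of (D,+), there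
is some j ≤ n such that ⋂_{i≤n} H_i has finite index in ⋂_{i≠j} H_i. -/
def SatisfiesDagger (D : Type*) [DivisionRing D] [FirstOrder.Ring.CompatibleRing D]
    (n : ℕ) : Prop :=
  ∀ H : Fin (n + 1) → AddSubgroup D,
    (∀ i, Set.Definable₁ (Set.univ : Set D) FirstOrder.Language.ring (H i : Set D)) →
    ∃ j : Fin (n + 1),
      ((⨅ i, H i).addSubgroupOf (⨅ i ∈ ({j}ᶜ : Set (Fin (n + 1))), H i)).index ≠ 0

open Stmt11Aux

/-- Let n be a positive integer and D an infinite division ring, viewed as a first-order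
structure in the language of rings, satisfying (†)_n. Then every strictly descending chain
F_0 ⊋ F_1 ⊋ ⋯ ⊋ F_{k−1} of infinite definable (commutative) subfields of D has length
k ≤ ⌊log₂(n)⌋ + 1. -/
theorem stmt_11 (n : ℕ) (hn : 0 < n) (D : Type*) [DivisionRing D] [Infinite D]
    [FirstOrder.Ring.CompatibleRing D]
    (hdag : SatisfiesDagger D n)
    (k : ℕ) (F : Fin k → Subfield D)
    (hcomm : ∀ i, ∀ x ∈ F i, ∀ y ∈ F i, x * y = y * x)
    (hinf : ∀ i, ((F i : Set D)).Infinite)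
    (hdef : ∀ i, Set.Definable₁ (Set.univ : Set D) FirstOrder.Language.ring (F i : Set D))
    (hchain : ∀ i j : Fin k, i < j → F j < F i) :
    k ≤ Nat.log 2 n + 1 := by
  by_contra hk
  push_neg at hk
  set m := Nat.log 2 n + 1 with hm
  have hmk : m + 1 ≤ k := hk
  have hcard : n + 1 ≤ 2 ^ m := Nat.lt_pow_succ_log_self (by norm_num) n
  classical
  set G : Fin (m + 1) → Subfield D := fun i => F (Fin.castLE hmk i) with hG
  have hmono : ∀ i j : Fin (m + 1), i ≤ j → G j ≤ G i := by
    intro i j hij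
    rcases eq_or_lt_of_le hij with rfl | hlt
    · exact le_rfl
    · refine (hchain _ _ ?_).le
      simp only [Fin.lt_def, Fin.coe_castLE]
      exact hlt
  have hex : ∀ i : Fin m, ∃ x, x ∈ G i.castSucc ∧ x ∉ G i.succ := by
    intro i
    obtain ⟨x, hx1, hx2⟩ := SetLike.exists_of_lt (hchain _ _
      (by simp only [Fin.lt_def, Fin.coe_castLE, Fin.coe_castSucc, Fin.val_succ]; omega) :
      G i.succ < G i.castSucc)
    exact ⟨x, hx1, hx2⟩
  choose a ha1 ha2 using hex
  obtain ⟨e⟩ : Nonempty (Fin (n + 1) ↪ (Fin m → Bool)) := by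
    rw [Function.Embedding.nonempty_iff_card_le]
    simpa using hcard
  set Kf : Subfield D := G (Fin.last m) with hKf
  set c' : Fin (n + 1) → (Fin m → Bool) → D :=
    fun i η => if η = e i then 0 else dProd a η with hc'
  set H : Fin (n + 1) → AddSubgroup D := fun i =>
    { carrier := {x : D | ∃ y : (Fin m → Bool) → D, (∀ η, y η ∈ Kf) ∧ x = ∑ η, c' i η * y η}
      zero_mem' := ⟨0, fun _ => zero_mem _, by simp⟩
      add_mem' := by
        rintro x₁ x₂ ⟨y₁, hy₁, rfl⟩ ⟨y₂, hy₂, rfl⟩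
        exact ⟨y₁ + y₂, fun η => add_mem (hy₁ η) (hy₂ η), by
          simp [mul_add, Finset.sum_add_distrib]⟩
      neg_mem' := by
        rintro x ⟨y, hy, rfl⟩
        exact ⟨-y, fun η => neg_mem (hy η), by
          simp [mul_neg, ← Finset.sum_neg_distrib]⟩ } with hH
  have hmemH : ∀ (i : Fin (n + 1)) (x : D), x ∈ H i ↔
      ∃ y : (Fin m → Bool) → D, (∀ η, y η ∈ Kf) ∧ x = ∑ η, c' i η * y η := fun i x => Iff.rfl
  have hHdef : ∀ i, Set.Definable₁ (Set.univ : Set D) Language.ring ((H i : Set D)) := by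
    intro i
    exact definable_span (c' i) (fun _ => (Kf : Set D)) (fun _ => hdef _)
  obtain ⟨j, hj⟩ := hdag H hHdef
  apply hj
  have memB : ∀ x : D, x ∈ Kf →
      dProd a (e j) * x ∈ (⨅ i ∈ ({j}ᶜ : Set (Fin (n + 1))), H i) := by
    intro x hx
    simp only [AddSubgroup.mem_iInf]
    intro i hi
    replace hi : i ≠ j := hi
    have hne : e j ≠ e i := fun h => hi (e.injective h).symm
    rw [hmemH]
    have hy0 : ∀ η : Fin m → Bool, (if η = e j then x else 0) ∈ Kf := by
      intro η
      split
      · exact hx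
      · exact zero_mem _
    refine ⟨fun η => if η = e j then x else 0, hy0, ?_⟩
    show dProd a (e j) * x = ∑ η : Fin m → Bool, c' i η * (if η = e j then x else 0)
    have hs : (∑ η : Fin m → Bool, c' i η * (if η = e j then x else 0))
        = c' i (e j) * x := by
      rw [Finset.sum_eq_single (e j) (fun η _ hη => by simp [if_neg hη])
        (fun h => absurd (Finset.mem_univ _) h)]
      simp
    rw [hs, hc']
    simp only [if_neg hne]
  have key : ∀ z : D, z ∈ Kf → dProd a (e j) * z ∈ H j → z = 0 := by
    rintro z hz ⟨y, hy, hsum⟩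
    have hsum0 : (∑ η : Fin m → Bool, dProd a η *
        ((if η = e j then 0 else y η) - (if η = e j then z else 0))) = 0 := by
      have e1 : (∑ η : Fin m → Bool, dProd a η * (if η = e j then 0 else y η))
          = ∑ η : Fin m → Bool, c' j η * y η := by
        refine Finset.sum_congr rfl (fun η _ => ?_)
        rw [hc']
        by_cases h : η = e j
        · simp [h]
        · simp [h]
      have e2 : (∑ η : Fin m → Bool, dProd a η * (if η = e j then z else 0))
          = dProd a (e j) * z := by
        rw [Finset.sum_eq_single (e j) (fun η _ hη => by simp [if_neg hη])
          (fun h => absurd (Finset.mem_univ _) h)]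
        simp
      calc (∑ η : Fin m → Bool, dProd a η *
              ((if η = e j then 0 else y η) - (if η = e j then z else 0)))
          = (∑ η : Fin m → Bool, dProd a η * (if η = e j then 0 else y η))
            - ∑ η : Fin m → Bool, dProd a η * (if η = e j then z else 0) := by
            simp [mul_sub, Finset.sum_sub_distrib]
        _ = (∑ η : Fin m → Bool, c' j η * y η) - dProd a (e j) * z := by rw [e1, e2]
        _ = 0 := by rw [← hsum]; simp
    have hall := indep m G hmono a ha1 ha2
      (fun η => (if η = e j then 0 else y η) - (if η = e j then z else 0))
      (fun η => by
        refine sub_mem ?_ ?_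
        · split
          · exact zero_mem _
          · exact hy η
        · split
          · exact hz
          · exact zero_mem _) hsum0
    have hz0 := hall (e j)
    simpa using hz0
  haveI hKinf : Infinite ↥(Kf : Set D) := (hinf (Fin.castLE hmk (Fin.last m))).to_subtype
  set B : AddSubgroup D := ⨅ i ∈ ({j}ᶜ : Set (Fin (n + 1))), H i with hB
  set A' : AddSubgroup ↥B := (⨅ i, H i).addSubgroupOf B with hA'
  have hinj : Function.Injective (fun x : ↥(Kf : Set D) =>
      (QuotientAddGroup.mk ⟨dProd a (e j) * (x : D), memB x x.2⟩ : ↥B ⧸ A')) := by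
    intro x x' hxx
    rw [QuotientAddGroup.eq, AddSubgroup.mem_addSubgroupOf] at hxx
    have h5 : dProd a (e j) * ((x' : D) - (x : D)) ∈ (⨅ i, H i) := by
      have : dProd a (e j) * ((x' : D) - (x : D))
          = -(dProd a (e j) * (x : D)) + dProd a (e j) * (x' : D) := by
        rw [mul_sub, sub_eq_neg_add]
      rw [this]
      exact hxx
    have h6 : dProd a (e j) * ((x' : D) - (x : D)) ∈ H j := (iInf_le H j) h5
    have h7 := key _ (sub_mem x'.2 x.2) h6
    have : (x' : D) = (x : D) := by
      have := sub_eq_zero.mp h7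
      exact this
    exact Subtype.ext this.symm
  haveI : Infinite (↥B ⧸ A') := Infinite.of_injective _ hinj
  exact Nat.card_eq_zero_of_infinite
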